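/- arXiv:1805.04626 — 3 statements merged into one kernel-verified Lean document; each statement's English description precedes it below -/
import Mathlib

section
/- Let τ > 0 and let λ ∈ Λ_τ, where Λ_τ := { λ ∈ ℂ : Re λ < 0, |Arg(λ)| > π/2, |λ| < (1/τ)(|Arg(λ)| − π/2) }. Then there is no real number ω such that iω = λ·exp(−iωτ); that is, the characteristic function s ↦ s − λe^{−sτ} has no purely imaginary zeros. -/
open Real Complex

theorem stmt_4 (τ : ℝ) (hτ : 0 < τ) (l : ℂ)
    (hl : l ∈ {l : ℂ | l.re < 0 ∧ Real.pi / 2 < |Complex.arg l| ∧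
      ‖l‖ < (1 / τ) * (|Complex.arg l| - Real.pi / 2)}) :
    ¬ ∃ ω : ℝ, Complex.I * ω = l * Complex.exp (-(Complex.I * ω * τ)) := by
  obtain ⟨hre, harg, habs⟩ := hl
  rintro ⟨ω, hω⟩
  have hlam : l = Complex.I * ω * Complex.exp (Complex.I * ω * τ) := by
    have h : l * Complex.exp (-(Complex.I * ω * τ)) * Complex.exp (Complex.I * ω * τ) = l := by
      rw [mul_assoc, ← Complex.exp_add, neg_add_cancel, Complex.exp_zero, mul_one]
    rw [← hω] at h
    exact h.symm
  rcases eq_or_ne ω 0 with h0 | h0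
  · subst h0; simp at hlam; rw [hlam] at hre; simp at hre
  have habsl : ‖l‖ = |ω| := by
    rw [hlam]; simp [Complex.norm_exp]
  have hApi : |Complex.arg l| ≤ π := Complex.abs_arg_le_pi l
  have hωτ : |ω| * τ < |Complex.arg l| - π/2 := by
    rw [habsl] at habs
    calc |ω| * τ < (1/τ) * (|Complex.arg l| - π/2) * τ :=
          mul_lt_mul_of_pos_right habs hτ
      _ = |Complex.arg l| - π/2 := by field_simp
  have hωτ2 : |ω| * τ < π/2 := by linarith
  have hωτnn : 0 ≤ |ω| * τ := mul_nonneg (abs_nonneg _) hτ.le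
  rcases h0.lt_or_gt with hneg | hpos
  · have habsω : |ω| = -ω := abs_of_neg hneg
    have hθ : ω * τ - π/2 ∈ Set.Ioc (-π) π := by
      constructor <;> nlinarith
    have harg' : Complex.arg l = ω * τ - π/2 := by
      rw [hlam]
      rw [show Complex.I * ω * Complex.exp (Complex.I * ω * τ)
          = ((-ω : ℝ) : ℂ) * (Complex.cos ((ω*τ - π/2 : ℝ) : ℂ) + Complex.sin ((ω*τ - π/2 : ℝ) : ℂ) * Complex.I) by
        rw [show (Complex.I * ω * τ) = (((ω*τ:ℝ):ℂ)) * Complex.I by push_cast; ring,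
          Complex.exp_mul_I]
        push_cast
        rw [Complex.cos_sub_pi_div_two, Complex.sin_sub_pi_div_two]
        linear_combination (ω : ℂ) * Complex.sin (ω*τ) * Complex.I_sq]
      exact Complex.arg_mul_cos_add_sin_mul_I (neg_pos.mpr hneg) hθ
    rw [harg'] at hωτ
    rw [abs_of_nonpos (show ω*τ - π/2 ≤ 0 by nlinarith)] at hωτ
    nlinarith
  · have habsω : |ω| = ω := abs_of_pos hpos
    have hθ : π/2 + ω * τ ∈ Set.Ioc (-π) π := by
      constructor <;> nlinarith
    have harg' : Complex.arg l = π/2 + ω * τ := by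
      rw [hlam]
      rw [show Complex.I * ω * Complex.exp (Complex.I * ω * τ)
          = ((ω : ℝ) : ℂ) * (Complex.cos ((π/2 + ω*τ : ℝ) : ℂ) + Complex.sin ((π/2 + ω*τ : ℝ) : ℂ) * Complex.I) by
        rw [show (Complex.I * ω * τ) = (((ω*τ:ℝ):ℂ)) * Complex.I by push_cast; ring,
          Complex.exp_mul_I]
        push_cast
        rw [Complex.cos_add, Complex.sin_add, Complex.cos_pi_div_two, Complex.sin_pi_div_two]
        linear_combination (ω : ℂ) * Complex.sin (ω*τ) * Complex.I_sq]
      exact Complex.arg_mul_cos_add_sin_mul_I hpos hθ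
    rw [harg'] at hωτ
    rw [_root_.abs_of_nonneg (show (0:ℝ) ≤ π/2 + ω*τ by nlinarith)] at hωτ
    nlinarith
end

section
/- Let λ = |λ|e^{i(π/2 + ε)} with ε ∈ (0, π/2], τ > 0, and suppose |λ|τ < ε. Fix δ ∈ (0,1) with (1+δ)|λ|τ < ε, and set m := cos(ε − (1+δ)|λ|τ) ∈ [0,1). Then for every ω ∈ [(1−δ)|λ|, (1+δ)|λ|], one has |iω − λ·e^{−iωτ}|² ≥ (1 − m²)·|λ|², and consequently ∫_{(1−δ)|λ|}^{(1+δ)|λ|} dω/|iω − λe^{−iωτ}|² ≤ 2δ/((1 − m²)|λ|). -/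
lemma aux_abs (ω r θ : ℝ) :
    ‖Complex.I * ω - (r:ℂ) * Complex.exp ((θ:ℂ) * Complex.I)‖ ^ 2
      = ω^2 + r^2 - 2*ω*r*Real.sin θ := by
  rw [Complex.exp_mul_I, ← Complex.normSq_eq_norm_sq]
  simp [Complex.normSq_apply, Complex.cos_ofReal_re, Complex.sin_ofReal_re]
  nlinarith [Real.sin_sq_add_cos_sq θ]

theorem stmt_15 (l : ℂ) (ε τ δ m : ℝ) (hl : l ≠ 0)
    (hlarg : l = (‖l‖ : ℂ) * Complex.exp (Complex.I * (Real.pi / 2 + ε)))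
    (hε : ε ∈ Set.Ioc (0 : ℝ) (Real.pi / 2)) (hτ : 0 < τ)
    (hlt : ‖l‖ * τ < ε) (hδ : δ ∈ Set.Ioo (0 : ℝ) 1)
    (hδτ : (1 + δ) * (‖l‖ * τ) < ε)
    (hm : m = Real.cos (ε - (1 + δ) * (‖l‖ * τ))) :
    (∀ ω ∈ Set.Icc ((1 - δ) * ‖l‖) ((1 + δ) * ‖l‖),
      (1 - m ^ 2) * ‖l‖ ^ 2 ≤
        ‖Complex.I * ω - l * Complex.exp (-(Complex.I * ω * τ))‖ ^ 2) ∧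
    ∫ ω in ((1 - δ) * ‖l‖)..((1 + δ) * ‖l‖),
        1 / ‖Complex.I * ω - l * Complex.exp (-(Complex.I * ω * τ))‖ ^ 2 ≤
      2 * δ / ((1 - m ^ 2) * ‖l‖) := by
  set r := ‖l‖ with hr'
  have hr : 0 < r := by
    simpa [hr'] using (norm_pos_iff.mpr hl)
  obtain ⟨hε0, hε2⟩ := hε
  obtain ⟨hδ0, hδ1⟩ := hδ
  -- formula for the modulus squared
  have key : ∀ ω : ℝ, ‖Complex.I * ω - l * Complex.exp (-(Complex.I * ω * τ))‖ ^ 2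
      = ω^2 + r^2 - 2*ω*r*Real.cos (ε - ω*τ) := by
    intro ω
    have h1 : Complex.I * ω - l * Complex.exp (-(Complex.I * ω * τ))
        = Complex.I * ω - (r:ℂ) * Complex.exp (((Real.pi / 2 + ε - ω*τ : ℝ) : ℂ) * Complex.I) := by
      rw [hlarg, mul_assoc, ← Complex.exp_add]
      push_cast
      ring_nf
    rw [h1, aux_abs]
    have : Real.sin (Real.pi / 2 + ε - ω * τ) = Real.cos (ε - ω * τ) := by
      rw [show Real.pi / 2 + ε - ω * τ = Real.pi/2 + (ε - ω * τ) by ring, Real.sin_add]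
      simp
    rw [this]
  -- m properties
  have hml : m < 1 := by
    rw [hm]
    have h0 : 0 < ε - (1 + δ) * (r * τ) := by linarith
    have h2 : ε - (1 + δ) * (r * τ) ≤ Real.pi := by
      nlinarith [Real.pi_gt_three, mul_pos hr hτ]
    have := Real.cos_lt_cos_of_nonneg_of_le_pi (le_refl 0) h2 h0
    simpa using this
  have hm0 : 0 ≤ m := by
    rw [hm]
    apply Real.cos_nonneg_of_mem_Icc
    constructor
    · nlinarith [mul_pos hr hτ]
    · nlinarith [mul_pos hr hτ, mul_pos hδ0 (mul_pos hr hτ)]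
  have hm2 : 0 < 1 - m ^ 2 := by nlinarith
  -- the pointwise bound
  have hpt : ∀ ω ∈ Set.Icc ((1 - δ) * r) ((1 + δ) * r),
      (1 - m ^ 2) * r ^ 2 ≤
        ‖Complex.I * ω - l * Complex.exp (-(Complex.I * ω * τ))‖ ^ 2 := by
    intro ω hω
    obtain ⟨hω1, hω2⟩ := hω
    have hω0 : 0 < ω := lt_of_lt_of_le (by nlinarith) hω1
    rw [key ω]
    have hcos : Real.cos (ε - ω*τ) ≤ m := by
      rw [hm]
      apply Real.cos_le_cos_of_nonneg_of_le_pi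
      · nlinarith [mul_pos hr hτ]
      · nlinarith [Real.pi_gt_three, mul_pos hr hτ]
      · nlinarith [mul_pos hr hτ]
    nlinarith [sq_nonneg (ω - m * r), mul_pos hω0 hr]
  refine ⟨hpt, ?_⟩
  -- integral bound
  have hab' : (1 - δ) * r ≤ (1 + δ) * r := by nlinarith [mul_pos hδ0 hr]
  set a := (1 - δ) * r with ha
  set b := (1 + δ) * r with hb
  have hab : a ≤ b := hab' 
  have hCpos : 0 < (1 - m ^ 2) * r ^ 2 := by positivity
  have hbound : ∀ ω ∈ Set.Icc a b,
      1 / ‖Complex.I * ω - l * Complex.exp (-(Complex.I * ω * τ))‖ ^ 2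
        ≤ 1 / ((1 - m ^ 2) * r ^ 2) := by
    intro ω hω
    exact one_div_le_one_div_of_le hCpos (hpt ω hω)
  have hcont : ContinuousOn (fun ω : ℝ =>
      1 / ‖Complex.I * ω - l * Complex.exp (-(Complex.I * ω * τ))‖ ^ 2)
      (Set.Icc a b) := by
    apply ContinuousOn.div continuousOn_const
    · apply Continuous.continuousOn
      apply Continuous.pow
      apply continuous_norm.comp
      exact (continuous_const.mul Complex.continuous_ofReal).sub
        (continuous_const.mul (Complex.continuous_exp.comp
          (((continuous_const.mul Complex.continuous_ofReal).mul continuous_const).neg)))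
    · intro ω hω
      exact ne_of_gt (lt_of_lt_of_le hCpos (hpt ω hω))
  have hint : IntervalIntegrable (fun ω : ℝ =>
      1 / ‖Complex.I * ω - l * Complex.exp (-(Complex.I * ω * τ))‖ ^ 2)
      MeasureTheory.volume a b := by
    apply ContinuousOn.intervalIntegrable
    rwa [Set.uIcc_of_le hab]
  calc ∫ ω in a..b, 1 / ‖Complex.I * ω - l * Complex.exp (-(Complex.I * ω * τ))‖ ^ 2
      ≤ ∫ ω in a..b, 1 / ((1 - m ^ 2) * r ^ 2) := by
        apply intervalIntegral.integral_mono_on hab hint intervalIntegrable_const hbound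
    _ = (b - a) * (1 / ((1 - m ^ 2) * r ^ 2)) := by
        rw [intervalIntegral.integral_const, smul_eq_mul]
    _ = 2 * δ / ((1 - m ^ 2) * r) := by
        field_simp
        ring
end

section
/- Let τ > 0 and λ ∈ Λ_τ := { λ ∈ ℂ : Re λ < 0, |Arg λ| > π/2, |λ| < (1/τ)(|Arg λ| − π/2) }. Then the integral ∫_{−∞}^{∞} dω/|iω − λ·e^{−iωτ}|² is finite; more precisely there exist δ, m ∈ (0,1) such that it is bounded above by 2(2−δ)/(δ|λ|) + 4δ/((1−m²)|λ|). -/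
open MeasureTheory Real Set Filter Topology

set_option maxHeartbeats 1000000

lemma exp_neg_I_eq (ω τ : ℝ) :
    Complex.exp (-(Complex.I * ω * τ)) =
      (Real.cos (ω * τ) : ℂ) - (Real.sin (ω * τ) : ℂ) * Complex.I := by
  have h : -(Complex.I * (ω : ℂ) * (τ : ℂ)) = ((-(ω * τ) : ℝ) : ℂ) * Complex.I := by
    push_cast; ring
  rw [h, Complex.exp_mul_I, ← Complex.ofReal_cos, ← Complex.ofReal_sin,
    Real.cos_neg, Real.sin_neg]
  push_cast; ring

lemma sq_abs_eq (l : ℂ) (τ ω : ℝ) :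
    ‖Complex.I * ω - l * Complex.exp (-(Complex.I * ω * τ))‖ ^ 2
      = ω ^ 2 + ‖l‖ ^ 2
        - 2 * ω * (l.im * Real.cos (ω * τ) - l.re * Real.sin (ω * τ)) := by
  have hl2 : ‖l‖ ^ 2 = l.re ^ 2 + l.im ^ 2 := by
    rw [Complex.sq_norm, Complex.normSq_apply]; ring
  rw [Complex.sq_norm, Complex.normSq_apply, exp_neg_I_eq, hl2]
  simp only [Complex.sub_re, Complex.sub_im, Complex.mul_re, Complex.mul_im,
    Complex.I_re, Complex.I_im, Complex.ofReal_re, Complex.ofReal_im]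
  ring_nf
  linear_combination (l.re ^ 2 + l.im ^ 2) * Real.sin_sq_add_cos_sq (ω * τ)

lemma far_bound (l : ℂ) (τ ω : ℝ) :
    |(|ω| - ‖l‖)| ≤
      ‖Complex.I * ω - l * Complex.exp (-(Complex.I * ω * τ))‖ := by
  have h1 : ‖Complex.I * ω‖ = |ω| := by
    simp [map_mul]
  have h2 : ‖l * Complex.exp (-(Complex.I * ω * τ))‖ = ‖l‖ := by
    rw [norm_mul, Complex.norm_exp]
    have : (-(Complex.I * ω * τ)).re = 0 := by simp
    rw [this, Real.exp_zero, mul_one]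
  have h3 := abs_norm_sub_norm_le (Complex.I * (ω:ℂ)) (l * Complex.exp (-(Complex.I * ω * τ)))
  rw [h1, h2] at h3
  exact h3


lemma near_bound (l : ℂ) (τ : ℝ) (hτ : 0 < τ) (δ m : ℝ) (hδ : 0 < δ)
    (hθ1 : π / 2 < l.arg) (hb : (1 + δ) * (‖l‖ * τ) < l.arg - π / 2)
    (hm1 : Real.cos (l.arg - π / 2 - (1 + δ) * (‖l‖ * τ)) ≤ m)
    (hm2 : Real.sin ((1 + δ) * (‖l‖ * τ)) ≤ m)
    (ω : ℝ) (hω : |ω| ≤ (1 + δ) * ‖l‖) :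
    (1 - m ^ 2) * ‖l‖ ^ 2 ≤
      ‖Complex.I * ω - l * Complex.exp (-(Complex.I * ω * τ))‖ ^ 2 := by
  have hl0 : l ≠ 0 := by
    intro h; rw [h, Complex.arg_zero] at hθ1; linarith [Real.pi_pos]
  set r := ‖l‖ with hr
  have hrpos : 0 < r := norm_pos_iff.mpr hl0
  set θ := l.arg with hθ
  have hθ2 : θ ≤ π := Complex.arg_le_pi l
  set t := ω * τ with ht
  have hre : l.re = r * Real.cos θ := by
    rw [hθ, Complex.cos_arg hl0, ← hr]; field_simp
  have him : l.im = r * Real.sin θ := by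
    rw [hθ, Complex.sin_arg, ← hr]; field_simp
  have hkey : l.im * Real.cos t - l.re * Real.sin t = r * Real.sin (θ - t) := by
    rw [hre, him, Real.sin_sub]; ring
  set b := (1 + δ) * (r * τ) with hbdef
  have hbpos : 0 < b := by positivity
  have hb2 : b ≤ π / 2 := by linarith
  have htabs : |t| ≤ b := by
    rw [ht, abs_mul, abs_of_pos hτ]
    calc |ω| * τ ≤ ((1 + δ) * r) * τ := by nlinarith
      _ = b := by rw [hbdef]; ring
  have hs : ω * Real.sin (θ - t) ≤ m * |ω| := by
    rcases le_or_gt 0 ω with h0 | h0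
    · have habs : |ω| = ω := abs_of_nonneg h0
      have ht0 : 0 ≤ t := mul_nonneg h0 hτ.le
      have ht1 : t ≤ b := by rwa [abs_of_nonneg ht0] at htabs
      have hsin : Real.sin (θ - t) ≤ m := by
        have hx : Real.cos (θ - t - π / 2) = Real.sin (θ - t) := by
          rw [show θ - t - π / 2 = -(π / 2 - (θ - t)) by ring, Real.cos_neg,
            Real.cos_pi_div_two_sub]
        rw [← hx]
        refine le_trans (Real.cos_le_cos_of_nonneg_of_le_pi (by linarith)
          (by linarith [Real.pi_pos]) (by linarith)) hm1
      calc ω * Real.sin (θ - t) ≤ ω * m := mul_le_mul_of_nonneg_left hsin h0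
        _ = m * |ω| := by rw [habs]; ring
    · have habs : |ω| = -ω := abs_of_neg h0
      have ht0 : t ≤ 0 := by rw [ht]; nlinarith
      have ht1 : -b ≤ t := by
        have := neg_abs_le t; linarith
      have hsin : -m ≤ Real.sin (θ - t) := by
        have hx : Real.cos (θ - t - π / 2) = Real.sin (θ - t) := by
          rw [show θ - t - π / 2 = -(π / 2 - (θ - t)) by ring, Real.cos_neg,
            Real.cos_pi_div_two_sub]
        have h4 : Real.cos (b + π / 2) ≤ Real.cos (θ - t - π / 2) :=
          Real.cos_le_cos_of_nonneg_of_le_pi (by linarith) (by linarith [Real.pi_pos])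
            (by linarith)
        rw [Real.cos_add_pi_div_two] at h4
        rw [← hx]; linarith
      calc ω * Real.sin (θ - t) ≤ ω * (-m) := mul_le_mul_of_nonpos_left hsin h0.le
        _ = m * |ω| := by rw [habs]; ring
  rw [sq_abs_eq, ← ht, hkey, ← hr]
  have habs2 : |ω| ^ 2 = ω ^ 2 := sq_abs ω
  have hs2 : 2 * r * (ω * Real.sin (θ - t)) ≤ 2 * r * (m * |ω|) :=
    mul_le_mul_of_nonneg_left hs (by positivity)
  nlinarith [sq_nonneg (|ω| - m * r)]


lemma conj_abs_eq (l : ℂ) (τ ω : ℝ) :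
    ‖Complex.I * ω - l * Complex.exp (-(Complex.I * ω * τ))‖
      = ‖Complex.I * ((-ω : ℝ) : ℂ) -
          (starRingEnd ℂ) l * Complex.exp (-(Complex.I * ((-ω : ℝ) : ℂ) * τ))‖ := by
  have h3 : ‖Complex.I * ω - l * Complex.exp (-(Complex.I * ω * τ))‖ ^ 2
      = ‖Complex.I * ((-ω : ℝ) : ℂ) -
          (starRingEnd ℂ) l * Complex.exp (-(Complex.I * ((-ω : ℝ) : ℂ) * τ))‖ ^ 2 := by
    rw [sq_abs_eq, sq_abs_eq]
    simp [Complex.norm_conj, Real.cos_neg, Real.sin_neg]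
    ring
  exact (sq_eq_sq₀ (norm_nonneg _) (norm_nonneg _)).1 h3


lemma integral_part (l : ℂ) (τ : ℝ) (r δ m : ℝ)
    (hr : 0 < r) (hrdef : r = ‖l‖)
    (hδ0 : 0 < δ) (hδ1 : δ < 1) (hm0 : 0 < m) (hm1 : m < 1)
    (hnear : ∀ ω : ℝ, |ω| ≤ (1 + δ) * r →
      (1 - m ^ 2) * r ^ 2 ≤
        ‖Complex.I * ω - l * Complex.exp (-(Complex.I * ω * τ))‖ ^ 2) :
    Integrable (fun ω : ℝ =>
      1 / ‖Complex.I * ω - l * Complex.exp (-(Complex.I * ω * τ))‖ ^ 2) ∧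
    ∫ ω : ℝ, 1 / ‖Complex.I * ω - l * Complex.exp (-(Complex.I * ω * τ))‖ ^ 2 ≤
      2 * (2 - δ) / (δ * r) + 4 * δ / ((1 - m ^ 2) * r) := by
  have hm2 : 0 < 1 - m ^ 2 := by nlinarith
  obtain ⟨a1, ha1⟩ : ∃ x, x = (1 - δ) * r := ⟨_, rfl⟩
  obtain ⟨b1, hb1⟩ : ∃ x, x = (1 + δ) * r := ⟨_, rfl⟩
  have ha1pos : 0 < a1 := by rw [ha1]; nlinarith
  have ha1r : a1 < r := by rw [ha1]; nlinarith
  have hb1r : r < b1 := by rw [hb1]; nlinarith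
  have hb1pos : 0 < b1 := lt_trans hr hb1r
  have hb1δ : b1 - r = δ * r := by rw [hb1]; ring
  have ha1δ : r - a1 = δ * r := by rw [ha1]; ring
  set φ : ℝ → ℝ := fun ω => 1 / (|ω| - r) ^ 2 with hφdef
  set A : Set ℝ := {ω : ℝ | a1 ≤ |ω| ∧ |ω| ≤ b1} with hAdef
  have hAmeas : MeasurableSet A := by
    have : A = abs ⁻¹' (Icc a1 b1) := by ext ω; simp [hAdef, mem_Icc]
    rw [this]
    exact (isClosed_Icc.preimage continuous_abs).measurableSet
  -- outer piece Ioi b1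
  have hderivIoi : ∀ x ∈ Ioi b1, HasDerivAt (fun y : ℝ => -(y - r)⁻¹) (1 / (x - r) ^ 2) x := by
    intro x hx
    have hne : x - r ≠ 0 := by simp only [mem_Ioi] at hx; nlinarith
    have h1 : HasDerivAt (fun y : ℝ => y - r) 1 x := (hasDerivAt_id x).sub_const r
    have h2 := (h1.inv hne).neg
    exact h2.congr_deriv (by ring)
  have hcontIoi : ContinuousWithinAt (fun y : ℝ => -(y - r)⁻¹) (Ici b1) b1 := by
    have hne : b1 - r ≠ 0 := by nlinarith
    exact (((continuousAt_id.sub continuousAt_const).inv₀ hne).neg).continuousWithinAt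
  have htendIoi : Tendsto (fun y : ℝ => -(y - r)⁻¹) atTop (𝓝 0) := by
    have h1 : Tendsto (fun y : ℝ => y - r) atTop atTop :=
      tendsto_atTop_add_const_right _ (-r) tendsto_id
    have h2 : Tendsto (fun y : ℝ => (y - r)⁻¹) atTop (𝓝 0) := h1.inv_tendsto_atTop
    simpa using h2.neg
  have hInt1 : IntegrableOn (fun x : ℝ => 1 / (x - r) ^ 2) (Ioi b1) := by
    refine integrableOn_Ioi_deriv_of_nonneg hcontIoi hderivIoi (fun x hx => by positivity) htendIoi
  have hVal1 : ∫ x in Ioi b1, 1 / (x - r) ^ 2 = 1 / (δ * r) := by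
    rw [integral_Ioi_of_hasDerivAt_of_tendsto hcontIoi hderivIoi hInt1 htendIoi]
    rw [← hb1δ]
    have : b1 - r ≠ 0 := by nlinarith
    field_simp
    ring
  have hEq1 : EqOn (fun x : ℝ => 1 / (x - r) ^ 2) φ (Ioi b1) := by
    intro x hx
    simp only [mem_Ioi] at hx
    have : |x| = x := abs_of_pos (lt_trans hb1pos hx)
    simp [hφdef, this]
  have hφIoi : IntegrableOn φ (Ioi b1) := hInt1.congr_fun hEq1 measurableSet_Ioi
  have hφVal1 : ∫ x in Ioi b1, φ x = 1 / (δ * r) := by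
    rw [← setIntegral_congr_fun measurableSet_Ioi hEq1]; exact hVal1
  -- piece Iio (-b1) by symmetry
  have hnegpre : (Neg.neg ⁻¹' Ioi b1 : Set ℝ) = Iio (-b1) := by
    ext x; simp only [mem_preimage, mem_Ioi, mem_Iio]; constructor <;> intro h <;> linarith
  have hφeven : (φ ∘ Neg.neg) = φ := funext fun x => by simp [hφdef]
  have hφIio : IntegrableOn φ (Iio (-b1)) := by
    have h := (MeasurePreserving.integrableOn_comp_preimage
      (Measure.measurePreserving_neg (volume : Measure ℝ))
      (Homeomorph.neg ℝ).measurableEmbedding).2 hφIoi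
    rwa [hφeven, hnegpre] at h
  have hφVal2 : ∫ x in Iio (-b1), φ x = 1 / (δ * r) := by
    rw [← integral_Iic_eq_integral_Iio, ← integral_comp_neg_Ioi]
    have : ∀ x : ℝ, φ (-x) = φ x := fun x => by simp [hφdef]
    simp only [this]
    exact hφVal1
  -- middle pieces
  have hcontmid : ContinuousOn φ (Icc (-a1) a1) := by
    apply ContinuousOn.div continuousOn_const
    · exact ((continuous_abs.continuousOn.sub continuousOn_const).pow 2)
    · intro x hx
      have hx1 : |x| ≤ a1 := abs_le.2 ⟨hx.1, hx.2⟩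
      have : |x| - r ≠ 0 := by nlinarith
      positivity
  have hφmid : IntegrableOn φ (Icc (-a1) a1) := hcontmid.integrableOn_Icc
  have hφIoc : IntegrableOn φ (Ioc (-a1) 0) :=
    hφmid.mono_set (fun x hx => ⟨le_of_lt hx.1, le_trans hx.2 ha1pos.le⟩)
  have hφIoo : IntegrableOn φ (Ioo 0 a1) :=
    hφmid.mono_set (fun x hx => ⟨le_trans (by linarith [ha1pos]) hx.1.le, hx.2.le⟩)
  -- value on Ioc (-a1) 0
  have hEq3 : EqOn φ (fun x : ℝ => 1 / (x + r) ^ 2) (Ioc (-a1) 0) := by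
    intro x hx
    have : |x| = -x := abs_of_nonpos hx.2
    simp only [hφdef, this]
    ring_nf
  have hVal3 : ∫ x in Ioc (-a1) 0, φ x = 1 / (δ * r) - 1 / r := by
    rw [setIntegral_congr_fun measurableSet_Ioc hEq3,
      ← intervalIntegral.integral_of_le (by linarith : -a1 ≤ (0:ℝ))]
    have hderiv : ∀ x ∈ uIcc (-a1) (0:ℝ),
        HasDerivAt (fun y : ℝ => -(y + r)⁻¹) (1 / (x + r) ^ 2) x := by
      intro x hx
      rw [uIcc_of_le (by linarith : -a1 ≤ (0:ℝ))] at hx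
      have hne : x + r ≠ 0 := by have := hx.1; nlinarith
      have h1 : HasDerivAt (fun y : ℝ => y + r) 1 x := (hasDerivAt_id x).add_const r
      have h2 := (h1.inv hne).neg
      exact h2.congr_deriv (by ring)
    have hii : IntervalIntegrable (fun x : ℝ => 1 / (x + r) ^ 2) volume (-a1) 0 := by
      apply ContinuousOn.intervalIntegrable
      apply ContinuousOn.div continuousOn_const
      · exact ((continuous_id.continuousOn.add continuousOn_const).pow 2)
      · intro x hx
        rw [uIcc_of_le (by linarith : -a1 ≤ (0:ℝ))] at hx
        have hne : x + r ≠ 0 := by have := hx.1; nlinarith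
        positivity
    rw [intervalIntegral.integral_eq_sub_of_hasDerivAt hderiv hii]
    rw [← ha1δ]
    have h1 : r - a1 ≠ 0 := by nlinarith
    have h2 : r ≠ 0 := by nlinarith
    rw [show (-a1 + r) = r - a1 by ring]
    field_simp [h1, h2]
    ring
  -- value on Ioo 0 a1
  have hEq4 : EqOn φ (fun x : ℝ => 1 / (x - r) ^ 2) (Ioc 0 a1) := by
    intro x hx
    have : |x| = x := abs_of_pos hx.1
    simp only [hφdef, this]
  have hVal4 : ∫ x in Ioo 0 a1, φ x = 1 / (δ * r) - 1 / r := by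
    rw [← integral_Ioc_eq_integral_Ioo, setIntegral_congr_fun measurableSet_Ioc hEq4,
      ← intervalIntegral.integral_of_le ha1pos.le]
    have hderiv : ∀ x ∈ uIcc (0:ℝ) a1,
        HasDerivAt (fun y : ℝ => -(y - r)⁻¹) (1 / (x - r) ^ 2) x := by
      intro x hx
      rw [uIcc_of_le ha1pos.le] at hx
      have hne : x - r ≠ 0 := by have := hx.2; nlinarith
      have h1 : HasDerivAt (fun y : ℝ => y - r) 1 x := (hasDerivAt_id x).sub_const r
      have h2 := (h1.inv hne).neg
      exact h2.congr_deriv (by ring)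
    have hii : IntervalIntegrable (fun x : ℝ => 1 / (x - r) ^ 2) volume 0 a1 := by
      apply ContinuousOn.intervalIntegrable
      apply ContinuousOn.div continuousOn_const
      · exact ((continuous_id.continuousOn.sub continuousOn_const).pow 2)
      · intro x hx
        rw [uIcc_of_le ha1pos.le] at hx
        have hne : x - r ≠ 0 := by have := hx.2; nlinarith
        positivity
    rw [intervalIntegral.integral_eq_sub_of_hasDerivAt hderiv hii]
    rw [← ha1δ]
    have h1 : a1 - r ≠ 0 := by nlinarith
    have h1' : r - a1 ≠ 0 := by nlinarith
    have h2 : r ≠ 0 := by nlinarith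
    rw [show (0 - r) = -r by ring]
    field_simp [h1, h1', h2]
    ring
  -- decomposition of Aᶜ
  have hAc : Aᶜ = (Iio (-b1) ∪ (Ioc (-a1) 0 ∪ Ioo 0 a1)) ∪ Ioi b1 := by
    ext x
    simp only [mem_compl_iff, hAdef, mem_setOf_eq, not_and_or, not_le, mem_union, mem_Iio,
      mem_Ioc, mem_Ioo, mem_Ioi]
    constructor
    · intro h
      rcases h with h | h
      · rcases le_or_gt x 0 with hx | hx
        · rw [abs_of_nonpos hx] at h
          exact Or.inl (Or.inr (Or.inl ⟨by linarith, hx⟩))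
        · rw [abs_of_pos hx] at h
          exact Or.inl (Or.inr (Or.inr ⟨hx, h⟩))
      · rcases le_or_gt x 0 with hx | hx
        · rw [abs_of_nonpos hx] at h
          exact Or.inl (Or.inl (by linarith))
        · rw [abs_of_pos hx] at h
          exact Or.inr h
    · intro h
      rcases h with (h | ⟨h3, h4⟩ | ⟨h3, h4⟩) | h
      · right; rw [abs_of_nonpos (by linarith : x ≤ 0)]; linarith
      · left; rw [abs_of_nonpos h4]; linarith
      · left; rw [abs_of_pos h3]; linarith
      · right; rw [abs_of_pos (by linarith : 0 < x)]; linarith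
  have hdisj1 : Disjoint (Ioc (-a1) (0:ℝ)) (Ioo 0 a1) := by
    rw [Set.disjoint_left]
    rintro x ⟨_, h2⟩ ⟨h3, _⟩
    linarith
  have hdisj2 : Disjoint (Iio (-b1)) (Ioc (-a1) 0 ∪ Ioo 0 a1) := by
    rw [Set.disjoint_left]
    rintro x h1 (⟨h2, _⟩ | ⟨h2, _⟩) <;> simp only [mem_Iio] at h1 <;> linarith
  have hdisj3 : Disjoint (Iio (-b1) ∪ (Ioc (-a1) 0 ∪ Ioo 0 a1)) (Ioi b1) := by
    rw [Set.disjoint_left]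
    rintro x (h1 | ⟨_, h2⟩ | ⟨_, h2⟩) h3 <;> simp only [mem_Iio, mem_Ioi] at * <;> linarith
  have hφmid2 : IntegrableOn φ (Ioc (-a1) 0 ∪ Ioo 0 a1) := hφIoc.union hφIoo
  have hφleft : IntegrableOn φ (Iio (-b1) ∪ (Ioc (-a1) 0 ∪ Ioo 0 a1)) := hφIio.union hφmid2
  have hφAc : IntegrableOn φ Aᶜ := by rw [hAc]; exact hφleft.union hφIoi
  have hAcVal : ∫ x in Aᶜ, φ x = 2 * (2 - δ) / (δ * r) := by
    rw [hAc, setIntegral_union hdisj3 measurableSet_Ioi hφleft hφIoi,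
      setIntegral_union hdisj2 (measurableSet_Ioc.union measurableSet_Ioo) hφIio hφmid2,
      setIntegral_union hdisj1 measurableSet_Ioo hφIoc hφIoo,
      hφVal1, hφVal2, hVal3, hVal4]
    have h1 : δ * r ≠ 0 := by positivity
    have h2 : r ≠ 0 := by positivity
    field_simp
    ring
  -- the A piece
  have hAsub : A ⊆ Icc (-b1) (-a1) ∪ Icc a1 b1 := by
    rintro x ⟨h1, h2⟩
    rcases le_or_gt x 0 with hx | hx
    · rw [abs_of_nonpos hx] at h1 h2
      exact Or.inl ⟨by linarith, by linarith⟩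
    · rw [abs_of_pos hx] at h1 h2
      exact Or.inr ⟨h1, h2⟩
  have hAvol : volume A ≤ ENNReal.ofReal (4 * δ * r) := by
    calc volume A ≤ volume (Icc (-b1) (-a1) ∪ Icc a1 b1) := measure_mono hAsub
      _ ≤ volume (Icc (-b1) (-a1)) + volume (Icc a1 b1) := measure_union_le _ _
      _ = ENNReal.ofReal (-a1 - -b1) + ENNReal.ofReal (b1 - a1) := by
          rw [Real.volume_Icc, Real.volume_Icc]
      _ ≤ ENNReal.ofReal (4 * δ * r) := by
          rw [← ENNReal.ofReal_add (by nlinarith) (by nlinarith)]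
          apply ENNReal.ofReal_le_ofReal
          nlinarith
  have hAfin : volume A < ⊤ := lt_of_le_of_lt hAvol ENNReal.ofReal_lt_top
  obtain ⟨C, hC⟩ : ∃ C, C = 1 / ((1 - m ^ 2) * r ^ 2) := ⟨_, rfl⟩
  have hCpos : 0 < C := by rw [hC]; positivity
  have hg1int : Integrable (A.indicator fun _ => C) :=
    (integrable_indicator_iff hAmeas).2 (integrableOn_const hAfin.ne)
  have hg2int : Integrable (Aᶜ.indicator φ) := hφAc.integrable_indicator hAmeas.compl
  have hg1val : ∫ ω : ℝ, A.indicator (fun _ => C) ω ≤ 4 * δ / ((1 - m ^ 2) * r) := by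
    rw [integral_indicator hAmeas, setIntegral_const, smul_eq_mul]
    have h1 : (volume A).toReal ≤ 4 * δ * r :=
      ENNReal.toReal_le_of_le_ofReal (by positivity) hAvol
    calc (volume A).toReal * C ≤ (4 * δ * r) * C := by nlinarith
      _ = 4 * δ / ((1 - m ^ 2) * r) := by
          rw [hC]
          have : r ≠ 0 := by positivity
          have : (1 - m ^ 2) ≠ 0 := by positivity
          field_simp
  have hg2val : ∫ ω : ℝ, Aᶜ.indicator φ ω = 2 * (2 - δ) / (δ * r) := by
    rw [integral_indicator hAmeas.compl, hAcVal]
  -- the comparison function h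
  set h : ℝ → ℝ := fun ω => A.indicator (fun _ => C) ω + Aᶜ.indicator φ ω with hhdef
  have hhint : Integrable h := hg1int.add hg2int
  have hhval : ∫ ω : ℝ, h ω ≤ 2 * (2 - δ) / (δ * r) + 4 * δ / ((1 - m ^ 2) * r) := by
    rw [hhdef]
    rw [integral_add hg1int hg2int]
    rw [hg2val]
    linarith [hg1val]
  -- pointwise bound
  set f : ℝ → ℝ := fun ω : ℝ =>
    1 / ‖Complex.I * ω - l * Complex.exp (-(Complex.I * ω * τ))‖ ^ 2 with hfdef
  have hfh : f ≤ h := by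
    intro ω
    by_cases hω : ω ∈ A
    · have h1 : h ω = C := by
        rw [hhdef]
        simp only
        rw [indicator_of_mem hω, indicator_of_notMem (by simp [hω] : ω ∉ Aᶜ), add_zero]
      rw [h1, hfdef]
      simp only
      rw [hC]
      apply one_div_le_one_div_of_le (by positivity)
      have := hnear ω (by rw [← hb1]; exact hω.2)
      linarith
    · have h1 : h ω = φ ω := by
        rw [hhdef]
        simp only
        rw [indicator_of_notMem hω, indicator_of_mem (mem_compl hω), zero_add]
      rw [h1, hfdef, hφdef]
      simp only
      have hne : (|ω| - r) ^ 2 > 0 := by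
        rw [hAdef, mem_setOf_eq, not_and_or, not_le, not_le] at hω
        rcases hω with h2 | h2 <;> nlinarith
      apply one_div_le_one_div_of_le hne
      have h3 := far_bound l τ ω
      rw [← hrdef] at h3
      calc (|ω| - r) ^ 2 = |(|ω| - r)| ^ 2 := (sq_abs _).symm
        _ ≤ ‖Complex.I * ω - l * Complex.exp (-(Complex.I * ω * τ))‖ ^ 2 := by
            apply pow_le_pow_left₀ (abs_nonneg _) h3
  have hfpos : ∀ ω, 0 ≤ f ω := fun ω => by rw [hfdef]; positivity
  have hhpos : ∀ ω, 0 ≤ h ω := by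
    intro ω
    rw [hhdef]
    apply add_nonneg
    · exact indicator_nonneg (fun _ _ => hCpos.le) ω
    · exact indicator_nonneg (fun x _ => by rw [hφdef]; positivity) ω
  have hfmeas : AEStronglyMeasurable f volume := by
    have hcont : Continuous fun ω : ℝ =>
        ‖Complex.I * ω - l * Complex.exp (-(Complex.I * ω * τ))‖ ^ 2 := by
      apply Continuous.pow
      apply continuous_norm.comp
      fun_prop
    have : Measurable f := by
      rw [hfdef]
      exact measurable_const.div hcont.measurable
    exact this.aestronglyMeasurable
  have hfint : Integrable f := by
    apply hhint.mono hfmeas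
    apply ae_of_all
    intro ω
    rw [Real.norm_eq_abs, Real.norm_eq_abs, abs_of_nonneg (hfpos ω), abs_of_nonneg (hhpos ω)]
    exact hfh ω
  exact ⟨hfint, le_trans (integral_mono hfint hhint hfh) hhval⟩


theorem stmt_16 (τ : ℝ) (hτ : 0 < τ) (l : ℂ)
    (hl : l ∈ {l : ℂ | l.re < 0 ∧ Real.pi / 2 < |Complex.arg l| ∧
      ‖l‖ < (1 / τ) * (|Complex.arg l| - Real.pi / 2)}) :
    ∃ δ ∈ Set.Ioo (0 : ℝ) 1, ∃ m ∈ Set.Ioo (0 : ℝ) 1,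
      MeasureTheory.Integrable
        (fun ω : ℝ =>
          1 / ‖Complex.I * ω - l * Complex.exp (-(Complex.I * ω * τ))‖ ^ 2) ∧
      ∫ ω : ℝ,
          1 / ‖Complex.I * ω - l * Complex.exp (-(Complex.I * ω * τ))‖ ^ 2 ≤
        2 * (2 - δ) / (δ * ‖l‖) + 4 * δ / ((1 - m ^ 2) * ‖l‖) := by
  obtain ⟨hre, hθ0, habs0⟩ := hl
  have hl0 : l ≠ 0 := fun h => by simp [h] at hre
  obtain ⟨r, hrdef⟩ : ∃ r, r = ‖l‖ := ⟨_, rfl⟩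
  have hr : 0 < r := hrdef ▸ norm_pos_iff.mpr hl0
  obtain ⟨θa, hθadef⟩ : ∃ θa, θa = |l.arg| := ⟨_, rfl⟩
  have hθ : π / 2 < θa := hθadef ▸ hθ0
  have hθa2 : θa ≤ π := hθadef ▸ Complex.abs_arg_le_pi l
  obtain ⟨c, hcdef⟩ : ∃ c, c = r * τ := ⟨_, rfl⟩
  have hc : 0 < c := by rw [hcdef]; positivity
  obtain ⟨d, hddef⟩ : ∃ d, d = θa - π / 2 := ⟨_, rfl⟩
  have hdpos : 0 < d := by rw [hddef]; linarith
  have hcd : c < d := by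
    have habs : r < 1 / τ * (θa - π / 2) := by rw [hrdef, hθadef]; exact habs0
    rw [hcdef, hddef]
    calc r * τ < (1 / τ * (θa - π / 2)) * τ := by nlinarith
      _ = θa - π / 2 := by field_simp
  have hd2 : d ≤ π / 2 := by rw [hddef]; linarith
  obtain ⟨δ, hδdef⟩ : ∃ x, x = min (1 / 2 : ℝ) ((d - c) / (2 * c)) := ⟨_, rfl⟩
  have hδ0 : 0 < δ := by rw [hδdef]; exact lt_min (by norm_num) (div_pos (by linarith) (by positivity))
  have hδ1 : δ < 1 := by
    rw [hδdef]; exact lt_of_le_of_lt (min_le_left _ _) (by norm_num)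
  obtain ⟨b, hbdef⟩ : ∃ b, b = (1 + δ) * c := ⟨_, rfl⟩
  have hb0 : 0 < b := by rw [hbdef]; positivity
  have hbd : b < d := by
    have h1 : δ ≤ (d - c) / (2 * c) := hδdef ▸ min_le_right _ _
    have h2 : δ * c ≤ (d - c) / 2 := by
      rw [le_div_iff₀ (by positivity : (0:ℝ) < 2 * c)] at h1
      nlinarith
    calc b = c + δ * c := by rw [hbdef]; ring
      _ ≤ c + (d - c) / 2 := by linarith
      _ < d := by linarith
  obtain ⟨m, hmdef⟩ : ∃ m, m = max (Real.cos (d - b)) (Real.sin b) := ⟨_, rfl⟩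
  have hbpi : b < π := by linarith [Real.pi_pos]
  have hm0 : 0 < m := by
    rw [hmdef]
    exact lt_of_lt_of_le (Real.sin_pos_of_pos_of_lt_pi hb0 hbpi) (le_max_right _ _)
  have hmem0 : (0:ℝ) ∈ Icc 0 π := ⟨le_refl _, Real.pi_pos.le⟩
  have hcos1 : Real.cos (d - b) < 1 := by
    have h := Real.strictAntiOn_cos hmem0
      (⟨by linarith, by linarith [Real.pi_pos]⟩ : d - b ∈ Icc 0 π) (by linarith)
    simpa using h
  have hsin1 : Real.sin b < 1 := by
    rw [← Real.cos_pi_div_two_sub]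
    have h := Real.strictAntiOn_cos hmem0
      (⟨by linarith, by linarith [Real.pi_pos]⟩ : π / 2 - b ∈ Icc 0 π) (by linarith)
    simpa using h
  have hm1 : m < 1 := by rw [hmdef]; exact max_lt hcos1 hsin1
  -- pointwise near bound for arbitrary sign of arg
  have hnear : ∀ ω : ℝ, |ω| ≤ (1 + δ) * r →
      (1 - m ^ 2) * r ^ 2 ≤
        ‖Complex.I * ω - l * Complex.exp (-(Complex.I * ω * τ))‖ ^ 2 := by
    intro ω hω
    have hbc : (1 + δ) * (r * τ) = b := by rw [hbdef, hcdef]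
    rcases abs_cases l.arg with ⟨h1, h2⟩ | ⟨h1, h2⟩
    · have hθaeq : θa = l.arg := by rw [hθadef, h1]
      have harg : π / 2 < l.arg := hθaeq ▸ hθ
      have hbb : (1 + δ) * (‖l‖ * τ) < l.arg - π / 2 := by
        rw [← hrdef, hbc, ← hθaeq, ← hddef]; exact hbd
      have h5 := near_bound l τ hτ δ m hδ0 harg hbb ?_ ?_ ω (by rwa [← hrdef])
      · rwa [← hrdef] at h5
      · have heq : l.arg - π / 2 - (1 + δ) * (‖l‖ * τ) = d - b := by
          rw [← hrdef, hbc, hddef, hθaeq]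
        rw [heq, hmdef]; exact le_max_left _ _
      · rw [← hrdef, hbc, hmdef]; exact le_max_right _ _
    · -- l.arg < 0
      have hargne : l.arg ≠ π := by intro h; rw [h] at h2; linarith [Real.pi_pos]
      have hθaeq : θa = -l.arg := by rw [hθadef, h1]
      have hconjarg : ((starRingEnd ℂ) l).arg = θa := by
        rw [Complex.arg_conj, if_neg hargne, hθaeq]
      have hconjabs : ‖(starRingEnd ℂ) l‖ = r := by
        rw [Complex.norm_conj, hrdef]
      rw [conj_abs_eq]
      have harg : π / 2 < ((starRingEnd ℂ) l).arg := by rw [hconjarg]; exact hθ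
      have hbb : (1 + δ) * (‖(starRingEnd ℂ) l‖ * τ) <
          ((starRingEnd ℂ) l).arg - π / 2 := by
        rw [hconjabs, hconjarg, hbc, ← hddef]; exact hbd
      have h5 := near_bound ((starRingEnd ℂ) l) τ hτ δ m hδ0 harg hbb ?_ ?_ (-ω)
        (by rw [hconjabs, abs_neg]; exact hω)
      · rwa [hconjabs] at h5
      · have heq : ((starRingEnd ℂ) l).arg - π / 2 -
            (1 + δ) * (‖(starRingEnd ℂ) l‖ * τ) = d - b := by
          rw [hconjabs, hconjarg, hbc, hddef]
        rw [heq, hmdef]; exact le_max_left _ _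
      · rw [hconjabs, hbc, hmdef]; exact le_max_right _ _
  rw [← hrdef]
  refine ⟨δ, ⟨hδ0, hδ1⟩, m, ⟨hm0, hm1⟩, ?_⟩
  exact integral_part l τ r δ m hr hrdef hδ0 hδ1 hm0 hm1 hnear
end
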